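/- Let n ≥ 1, let H ∈ ℂ[x₁,…,xₙ] be a squarefree, nonconstant homogeneous polynomial, and let P ∈ ℂ[x₁,…,xₙ] be a homogeneous polynomial such that [H,P] = 0, i.e. (∂H/∂xᵢ)(∂P/∂xⱼ) − (∂H/∂xⱼ)(∂P/∂xᵢ) = 0 for all 1 ≤ i < j ≤ n. Then there exist a ∈ ℂ and k ∈ ℕ such that P = a·H^k. Moreover, if P is homogeneous of degree d and deg H does not divide d, then P = 0. -/

import Mathlib

open MvPolynomial Finsupp

-- L1: coefficient of pderiv
lemma coeff_pderiv' {n : ℕ} (j : Fin n) (f : MvPolynomial (Fin n) ℂ) (s : Fin n →₀ ℕ) :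
    coeff s (pderiv j f) = ((s j : ℂ) + 1) * coeff (s + Finsupp.single j 1) f := by
  induction f using MvPolynomial.induction_on' with
  | monomial m a =>
    rw [pderiv_monomial, coeff_monomial, coeff_monomial]
    by_cases h : m = s + Finsupp.single j 1
    · subst h
      rw [if_pos (add_tsub_cancel_right _ _), if_pos rfl]
      simp [mul_comm]
    · rw [if_neg h]
      by_cases h2 : m - Finsupp.single j 1 = s
      · rw [if_pos h2]
        have hmj : m j = 0 := by
          by_contra hmj
          apply h
          have hle : Finsupp.single j 1 ≤ m := by
            rw [Finsupp.single_le_iff]; omega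
          rw [← h2, tsub_add_cancel_of_le hle]
        simp [hmj]
      · rw [if_neg h2, mul_zero]
  | add p q hp hq => simp [map_add, coeff_add, hp, hq, mul_add]


-- L2
lemma eq_C_of_pderiv_zero {n : ℕ} (f : MvPolynomial (Fin n) ℂ)
    (h : ∀ j, pderiv j f = 0) : ∃ c, f = C c := by
  refine ⟨coeff 0 f, ?_⟩
  ext s
  rw [coeff_C]
  by_cases hs : 0 = s
  · rw [if_pos hs, ← hs]
  · rw [if_neg hs]
    have hs' : s ≠ 0 := fun h' => hs h'.symm
    obtain ⟨j, hj⟩ : ∃ j, s j ≠ 0 := by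
      by_contra hc; push_neg at hc; exact hs' (Finsupp.ext hc)
    have hle : Finsupp.single j 1 ≤ s := by rw [Finsupp.single_le_iff]; omega
    set u : Fin n →₀ ℕ := s - Finsupp.single j 1 with hu
    have husum : u + Finsupp.single j 1 = s := tsub_add_cancel_of_le hle
    have heq := coeff_pderiv' j f u
    rw [h j, coeff_zero, husum] at heq
    have hne : ((u j : ℂ) + 1) ≠ 0 := Nat.cast_add_one_ne_zero _
    exact ((mul_eq_zero.mp heq.symm).resolve_left hne)

-- L3: crux
lemma pderiv_eq_zero_of_self_dvd {n : ℕ} (f : MvPolynomial (Fin n) ℂ) (j : Fin n)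
    (h : f ∣ pderiv j f) : pderiv j f = 0 := by
  by_contra hne
  obtain ⟨t, ht⟩ := h
  have hf : f ≠ 0 := by rintro rfl; simp at hne
  have ht0 : t ≠ 0 := by rintro rfl; rw [mul_zero] at ht; exact hne ht
  set D : (Fin n →₀ ℕ) → Lex (Fin n →₀ ℕ) := fun s => toLex s with hD
  have hDinj : Function.Injective D := toLex.injective
  have hadd : ∀ a b : (Fin n →₀ ℕ), D (a + b) = D a + D b := fun _ _ => rfl
  have hlc : AddMonoidAlgebra.leadingCoeff D f * AddMonoidAlgebra.leadingCoeff D t ≠ 0 := by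
    apply mul_ne_zero
    · exact fun h => hf ((AddMonoidAlgebra.leadingCoeff_eq_zero hDinj).mp h)
    · exact fun h => ht0 ((AddMonoidAlgebra.leadingCoeff_eq_zero hDinj).mp h)
  have hmul : AddMonoidAlgebra.supDegree D (f * t)
      = AddMonoidAlgebra.supDegree D f + AddMonoidAlgebra.supDegree D t :=
    AddMonoidAlgebra.supDegree_mul hDinj hadd hlc hf ht0
  have h1 : AddMonoidAlgebra.supDegree D f ≤ AddMonoidAlgebra.supDegree D (pderiv j f) := by
    rw [ht, hmul]
    refine le_add_of_nonneg_right ?_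
    exact (bot_le : (⊥ : Lex (Fin n →₀ ℕ)) ≤ _)
  -- strict bound
  have hmem : ∀ s ∈ (pderiv j f).support, s + Finsupp.single j 1 ∈ f.support := by
    intro s hs
    rw [MvPolynomial.mem_support_iff] at hs ⊢
    intro hc
    rw [coeff_pderiv' j f s, hc, mul_zero] at hs
    exact hs rfl
  have hsingle : (0 : Lex (Fin n →₀ ℕ)) < toLex (Finsupp.single j 1) := by
    refine lt_of_le_of_ne (bot_le : (⊥ : Lex (Fin n →₀ ℕ)) ≤ _) ?_
    intro hc
    have : (Finsupp.single j 1 : Fin n →₀ ℕ) = 0 := toLex.injective hc.symm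
    simpa using Finsupp.single_eq_zero.mp this
  have h2 : AddMonoidAlgebra.supDegree D (pderiv j f) < AddMonoidAlgebra.supDegree D f := by
    obtain ⟨s0, hs0⟩ := (MvPolynomial.ne_zero_iff.mp hne)
    have hs0' : s0 ∈ (pderiv j f).support := MvPolynomial.mem_support_iff.mpr hs0
    have hbot : (⊥ : Lex (Fin n →₀ ℕ)) < AddMonoidAlgebra.supDegree D f := by
      refine lt_of_lt_of_le ?_ (Finset.le_sup (hmem s0 hs0'))
      calc (⊥ : Lex (Fin n →₀ ℕ)) ≤ toLex s0 := bot_le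
        _ < toLex (s0 + Finsupp.single j 1) := lt_add_of_pos_right _ hsingle
    rw [AddMonoidAlgebra.supDegree, Finset.sup_lt_iff hbot]
    intro s hs
    calc D s = toLex s := rfl
      _ < toLex (s + Finsupp.single j 1) := lt_add_of_pos_right _ hsingle
      _ ≤ AddMonoidAlgebra.supDegree D f := Finset.le_sup (hmem s hs)
  exact absurd (lt_of_le_of_lt h1 h2) (lt_irrefl _)


-- L4: Euler
lemma euler' {n : ℕ} (f : MvPolynomial (Fin n) ℂ) (d : ℕ) (hf : f.IsHomogeneous d) :
    ∑ j : Fin n, X j * pderiv j f = C (d : ℂ) * f := by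
  ext s
  rw [coeff_sum]
  have hterm : ∀ j : Fin n, coeff s (X j * pderiv j f)
      = if j ∈ s.support then (s j : ℂ) * coeff s f else 0 := by
    intro j
    classical
    rw [coeff_X_mul']
    by_cases hj : j ∈ s.support
    · rw [if_pos hj, if_pos hj]
      have hle : Finsupp.single j 1 ≤ s := by
        rw [Finsupp.single_le_iff]
        have := Finsupp.mem_support_iff.mp hj
        omega
      set u : Fin n →₀ ℕ := s - Finsupp.single j 1 with hu
      have husum : u + Finsupp.single j 1 = s := tsub_add_cancel_of_le hle
      rw [coeff_pderiv' j f u, husum]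
      congr 1
      have hsj : u j = s j - 1 := by
        rw [hu, Finsupp.tsub_apply, Finsupp.single_apply, if_pos rfl]
      have hpos : 1 ≤ s j := by
        have := Finsupp.mem_support_iff.mp hj; omega
      rw [hsj]
      have : (s j - 1 : ℕ) + 1 = s j := Nat.sub_add_cancel hpos
      conv_rhs => rw [← this]
      push_cast
      ring
    · rw [if_neg hj, if_neg hj]
  rw [Finset.sum_congr rfl (fun j _ => hterm j)]
  rw [Finset.sum_ite_mem, Finset.univ_inter]
  rw [← Finset.sum_mul, coeff_C_mul]
  by_cases hc : coeff s f = 0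
  · rw [hc, mul_zero, mul_zero]
  · congr 1
    have := hf hc
    rw [← this, Finsupp.weight_apply]
    simp only [Finsupp.sum, smul_eq_mul, Pi.one_apply, mul_one]
    push_cast
    rfl

-- degree-0 homogeneous is constant
lemma homog_zero_eq_C {n : ℕ} (f : MvPolynomial (Fin n) ℂ) (hf : f.IsHomogeneous 0) :
    ∃ c, f = C c := by
  refine ⟨coeff 0 f, ?_⟩
  ext s
  rw [coeff_C]
  by_cases hs : 0 = s
  · rw [if_pos hs, ← hs]
  · rw [if_neg hs]
    by_contra hc
    have := hf hc
    rw [Finsupp.weight_apply] at this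
    simp only [Finsupp.sum, smul_eq_mul, Pi.one_apply, mul_one] at this
    apply hs
    symm
    ext j
    by_contra hj
    have hmem : j ∈ s.support := Finsupp.mem_support_iff.mpr (by simpa using hj)
    have : 0 < ∑ i ∈ s.support, s i := Finset.sum_pos' (fun _ _ => Nat.zero_le _)
      ⟨j, hmem, Nat.pos_of_ne_zero (by simpa using hj)⟩
    omega

-- L8: in a UFD, a squarefree element divides anything divisible by all its prime factors
lemma squarefree_dvd_of_prime_dvd {α : Type*} [CommMonoidWithZero α] [Nontrivial α]
    [UniqueFactorizationMonoid α] {H P : α}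
    (hH : Squarefree H) (h : ∀ p : α, Prime p → p ∣ H → p ∣ P) : H ∣ P := by
  induction H using UniqueFactorizationMonoid.induction_on_prime generalizing P with
  | h₁ => exact absurd hH not_squarefree_zero
  | h₂ x hx => exact hx.dvd
  | h₃ a p ha hp IH =>
    have hsa : Squarefree a := hH.of_mul_right
    have hpP : p ∣ P := h p hp (dvd_mul_right p a)
    obtain ⟨Q, hQ⟩ := IH hsa (fun q hq hqa => h q hq (Dvd.dvd.mul_left hqa p))
    -- hQ : P = a * Q
    have hpa : ¬ p ∣ a := by
      intro hpa
      exact hp.not_unit (hH p (mul_dvd_mul_left p hpa))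
    have hpQ : p ∣ Q := by
      rcases hp.dvd_or_dvd (hQ ▸ hpP) with h1 | h1
      · exact absurd h1 hpa
      · exact h1
    obtain ⟨R, hR⟩ := hpQ
    exact ⟨R, by rw [hQ, hR, mul_left_comm, mul_assoc]⟩


lemma key {n : ℕ} (H : MvPolynomial (Fin n) ℂ) (dH : ℕ)
    (hHsf : Squarefree H) (hHhom : H.IsHomogeneous dH) (hdH : 0 < dH) :
    ∀ dP : ℕ, ∀ P : MvPolynomial (Fin n) ℂ, P.IsHomogeneous dP →
    (∀ i j : Fin n, pderiv i H * pderiv j P - pderiv j H * pderiv i P = 0) →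
    ∃ (a : ℂ) (k : ℕ), P = C a * H ^ k := by
  intro dP
  induction dP using Nat.strong_induction_on with
  | _ dP IH =>
  intro P hPhom hbr
  by_cases hP0 : P = 0
  · exact ⟨0, 0, by simp [hP0]⟩
  by_cases hdP : dP = 0
  · obtain ⟨c, hc⟩ := homog_zero_eq_C P (hdP ▸ hPhom)
    exact ⟨c, 0, by simp [hc]⟩
  have hH0 : H ≠ 0 := hHsf.ne_zero
  have hrel : ∀ j, C (dH:ℂ) * H * pderiv j P = C (dP:ℂ) * P * pderiv j H := by
    intro j
    have h1 : (∑ i : Fin n, X i * pderiv i H) * pderiv j P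
        = (∑ i : Fin n, X i * pderiv i P) * pderiv j H := by
      rw [Finset.sum_mul, Finset.sum_mul]
      refine Finset.sum_congr rfl (fun i _ => ?_)
      linear_combination (X i : MvPolynomial (Fin n) ℂ) * hbr i j
    rw [euler' H dH hHhom, euler' P dP hPhom] at h1
    exact h1
  have hdPC : ((dP:ℂ)) ≠ 0 := Nat.cast_ne_zero.mpr hdP
  have hC1 : (C ((dP:ℂ)⁻¹) : MvPolynomial (Fin n) ℂ) * C ((dP:ℂ)) = 1 := by
    rw [← C_mul, inv_mul_cancel₀ hdPC, C_1]
  have hPdH : ∀ j, H ∣ P * pderiv j H := by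
    intro j
    refine ⟨C ((dP:ℂ)⁻¹) * C (dH:ℂ) * pderiv j P, ?_⟩
    linear_combination (-(C ((dP:ℂ)⁻¹) : MvPolynomial (Fin n) ℂ)) * hrel j
      - (P * pderiv j H) * hC1
  have hHdvd : H ∣ P := by
    apply squarefree_dvd_of_prime_dvd hHsf
    intro q hq hqH
    by_contra hqP
    have hqd : ∀ j, q ∣ pderiv j H := by
      intro j
      have h2 : q ∣ P * pderiv j H := hqH.trans (hPdH j)
      exact (hq.dvd_or_dvd h2).resolve_left hqP
    obtain ⟨R, hR⟩ := hqH
    have hqR : ¬ q ∣ R := by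
      intro h
      obtain ⟨S, hS⟩ := h
      exact hq.not_unit (hHsf q ⟨S, by rw [hR, hS]; ring⟩)
    have hqdq : ∀ j, q ∣ pderiv j q := by
      intro j
      have h3 := hqd j
      rw [hR, pderiv_mul] at h3
      have h4 : q ∣ pderiv j q * R := by
        have h5 : q ∣ q * pderiv j R := Dvd.intro _ rfl
        have h6 := dvd_sub h3 h5
        rwa [add_sub_cancel_right] at h6
      exact (hq.dvd_or_dvd h4).resolve_right hqR
    have hdz : ∀ j, pderiv j q = 0 := fun j => pderiv_eq_zero_of_self_dvd q j (hqdq j)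
    obtain ⟨c, hc⟩ := eq_C_of_pderiv_zero q hdz
    have hc0 : c ≠ 0 := by
      rintro rfl
      rw [map_zero] at hc
      exact hq.ne_zero hc
    exact hq.not_unit (hc ▸ (isUnit_iff_ne_zero.mpr hc0).map (C : ℂ →+* MvPolynomial (Fin n) ℂ))
  obtain ⟨Q₀, hQ₀⟩ := hHdvd
  set N := Q₀.totalDegree with hN
  have hP2 : P = ∑ i ∈ Finset.range (N+1), H * homogeneousComponent i Q₀ := by
    rw [← Finset.mul_sum, sum_homogeneousComponent, hQ₀]
  have hP3 : P = ∑ i ∈ Finset.range (N+1),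
      if dP = dH + i then H * homogeneousComponent i Q₀ else 0 := by
    have h4 := congrArg (homogeneousComponent dP) hP2
    rw [homogeneousComponent_of_mem ((mem_homogeneousSubmodule _ _).mpr hPhom),
      if_pos rfl, map_sum] at h4
    rw [h4]
    refine Finset.sum_congr rfl (fun i _ => ?_)
    exact homogeneousComponent_of_mem ((mem_homogeneousSubmodule _ _).mpr
      (hHhom.mul (homogeneousComponent_isHomogeneous i Q₀)))
  have hle : dH ≤ dP := by
    by_contra hlt
    apply hP0
    rw [hP3]
    refine Finset.sum_eq_zero (fun i _ => ?_)
    rw [if_neg]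
    omega
  set e := dP - dH with he
  set Q := homogeneousComponent e Q₀ with hQdef
  have hor : P = if e ∈ Finset.range (N+1) then H * homogeneousComponent e Q₀ else 0 := by
    rw [hP3]
    rw [Finset.sum_congr rfl (fun i _ =>
      if_congr (show (dP = dH + i) ↔ (i = e) by omega) rfl rfl)]
    exact Finset.sum_ite_eq' _ _ _
  by_cases hmem : e ∈ Finset.range (N+1)
  swap
  · rw [if_neg hmem] at hor
    exact absurd hor hP0
  rw [if_pos hmem] at hor
  have hPQ : P = H * Q := hor
  have hQhom : Q.IsHomogeneous e := homogeneousComponent_isHomogeneous e Q₀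
  have hbrQ : ∀ i j : Fin n, pderiv i H * pderiv j Q - pderiv j H * pderiv i Q = 0 := by
    intro i j
    have h := hbr i j
    rw [hPQ] at h
    simp only [pderiv_mul] at h
    have h2 : H * (pderiv i H * pderiv j Q - pderiv j H * pderiv i Q) = 0 := by
      linear_combination h
    exact (mul_eq_zero.mp h2).resolve_left hH0
  obtain ⟨a, k, hak⟩ := IH e (by omega) Q hQhom hbrQ
  exact ⟨a, k+1, by rw [hPQ, hak]; ring⟩

theorem stmt0 (n : ℕ) (hn : 1 ≤ n) (H P : MvPolynomial (Fin n) ℂ) (dH dP : ℕ)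
    (hHsf : Squarefree H) (hHhom : H.IsHomogeneous dH) (hdH : 0 < dH)
    (hPhom : P.IsHomogeneous dP)
    (hbr : ∀ i j : Fin n, pderiv i H * pderiv j P - pderiv j H * pderiv i P = 0) :
    (∃ (a : ℂ) (k : ℕ), P = C a * H ^ k) ∧ (¬ dH ∣ dP → P = 0) := by
  obtain ⟨a, k, hak⟩ := key H dH hHsf hHhom hdH dP P hPhom hbr
  refine ⟨⟨a, k, hak⟩, fun hnd => ?_⟩
  by_cases ha : a = 0
  · rw [hak, ha, map_zero, zero_mul]
  · exfalso
    have hP0 : P ≠ 0 := by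
      rw [hak]
      exact mul_ne_zero (fun h => ha (by simpa using (C_eq_zero.mp h)))
        (pow_ne_zero _ hHsf.ne_zero)
    have h2 : P.IsHomogeneous (dH * k) := hak ▸ ((hHhom.pow k).C_mul a)
    exact hnd (MvPolynomial.IsHomogeneous.inj_right hPhom h2 hP0 ▸ ⟨k, rfl⟩)
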